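/- arXiv:0811.0682 — 2 statements merged into one kernel-verified Lean document; each statement's English description precedes it below -/
import Mathlib

section
/- For all a, b in (0,1) with a + b in (0,1), the determinant of the Hessian of v(a,b) = -(1/π)·sin(πa)sin(πb)/sin(π(a+b)) equals -4π²·sin(πa)²sin(πb)²/sin(π(a+b))⁴, which is strictly negative. -/
open Real

private lemma hasDerivAt_sin_mul (x : ℝ) :
    HasDerivAt (fun t => Real.sin (Real.pi*t)) (Real.pi * Real.cos (Real.pi*x)) x := by
  have h1 : HasDerivAt (fun t : ℝ => Real.pi*t) Real.pi x := by
    simpa using (hasDerivAt_id x).const_mul Real.pi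
  simpa [mul_comm] using h1.sin

private lemma hasDerivAt_inner (y x : ℝ) :
    HasDerivAt (fun t => Real.sin (Real.pi*(t+y))) (Real.pi * Real.cos (Real.pi*(x+y))) x := by
  have h1 : HasDerivAt (fun t : ℝ => Real.pi*(t+y)) Real.pi x := by
    simpa using ((hasDerivAt_id x).add_const y).const_mul Real.pi
  simpa [mul_comm] using h1.sin

private lemma hasDerivAt_inner' (x y : ℝ) :
    HasDerivAt (fun t => Real.sin (Real.pi*(x+t))) (Real.pi * Real.cos (Real.pi*(x+y))) y := by
  have h1 : HasDerivAt (fun t : ℝ => Real.pi*(x+t)) Real.pi y := by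
    simpa using ((hasDerivAt_id y).const_add x).const_mul Real.pi
  simpa [mul_comm] using h1.sin

private lemma sin_aux (x y : ℝ) :
    Real.sin (Real.pi*y) = Real.sin (Real.pi*(x+y)) * Real.cos (Real.pi*x)
      - Real.cos (Real.pi*(x+y)) * Real.sin (Real.pi*x) := by
  have h : Real.pi*y = Real.pi*(x+y) - Real.pi*x := by ring
  rw [h, Real.sin_sub]

private lemma hasDerivAt_vx (y x : ℝ) (h : Real.sin (Real.pi*(x+y)) ≠ 0) :
    HasDerivAt (fun t => -(1 / Real.pi) * (Real.sin (Real.pi*t) * Real.sin (Real.pi*y)) /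
        Real.sin (Real.pi*(t+y)))
      (-(Real.sin (Real.pi*y)^2) / Real.sin (Real.pi*(x+y))^2) x := by
  have hnum : HasDerivAt
      (fun t => -(1/Real.pi) * (Real.sin (Real.pi*t) * Real.sin (Real.pi*y)))
      (-(1/Real.pi) * (Real.pi * Real.cos (Real.pi*x) * Real.sin (Real.pi*y))) x := by
    have := (hasDerivAt_sin_mul x).mul_const (Real.sin (Real.pi*y))
    simpa [mul_assoc] using this.const_mul (-(1/Real.pi))
  have H := hnum.div (hasDerivAt_inner y x) h
  refine H.congr_deriv ?_
  rw [sin_aux x y]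
  have hpi := Real.pi_ne_zero
  field_simp
  ring

private lemma hasDerivAt_vy (x y : ℝ) (h : Real.sin (Real.pi*(x+y)) ≠ 0) :
    HasDerivAt (fun t => -(1 / Real.pi) * (Real.sin (Real.pi*x) * Real.sin (Real.pi*t)) /
        Real.sin (Real.pi*(x+t)))
      (-(Real.sin (Real.pi*x)^2) / Real.sin (Real.pi*(x+y))^2) y := by
  have hnum : HasDerivAt
      (fun t => -(1/Real.pi) * (Real.sin (Real.pi*x) * Real.sin (Real.pi*t)))
      (-(1/Real.pi) * (Real.sin (Real.pi*x) * (Real.pi * Real.cos (Real.pi*y)))) y := by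
    have := ((hasDerivAt_sin_mul y).const_mul (Real.sin (Real.pi*x)))
    simpa [mul_assoc] using this.const_mul (-(1/Real.pi))
  have H := hnum.div (hasDerivAt_inner' x y) h
  refine H.congr_deriv ?_
  have key : Real.sin (Real.pi*x) = Real.sin (Real.pi*(x+y)) * Real.cos (Real.pi*y)
      - Real.cos (Real.pi*(x+y)) * Real.sin (Real.pi*y) := by
    have h' : Real.pi*x = Real.pi*(x+y) - Real.pi*y := by ring
    rw [h', Real.sin_sub]
  have hpi := Real.pi_ne_zero
  rw [key]
  field_simp
  ring

private lemma hasDerivAt_w (C y x : ℝ) (h : Real.sin (Real.pi*(x+y)) ≠ 0) :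
    HasDerivAt (fun t => -C / Real.sin (Real.pi*(t+y))^2)
      (2*Real.pi*C*Real.cos (Real.pi*(x+y)) / Real.sin (Real.pi*(x+y))^3) x := by
  have hden : HasDerivAt (fun t => Real.sin (Real.pi*(t+y))^2)
      (2 * Real.sin (Real.pi*(x+y)) * (Real.pi * Real.cos (Real.pi*(x+y)))) x := by
    have := (hasDerivAt_inner y x).pow 2
    exact this.congr_deriv (by push_cast; ring)
  have H := (hasDerivAt_const x (-C)).div hden (pow_ne_zero 2 h)
  refine H.congr_deriv ?_
  field_simp
  ring

private lemma hasDerivAt_w' (C x y : ℝ) (h : Real.sin (Real.pi*(x+y)) ≠ 0) :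
    HasDerivAt (fun t => -C / Real.sin (Real.pi*(x+t))^2)
      (2*Real.pi*C*Real.cos (Real.pi*(x+y)) / Real.sin (Real.pi*(x+y))^3) y := by
  have hden : HasDerivAt (fun t => Real.sin (Real.pi*(x+t))^2)
      (2 * Real.sin (Real.pi*(x+y)) * (Real.pi * Real.cos (Real.pi*(x+y)))) y := by
    have := (hasDerivAt_inner' x y).pow 2
    exact this.congr_deriv (by push_cast; ring)
  have H := (hasDerivAt_const y (-C)).div hden (pow_ne_zero 2 h)
  refine H.congr_deriv ?_
  field_simp
  ring

private lemma hasDerivAt_m (y x : ℝ) (h : Real.sin (Real.pi*(x+y)) ≠ 0) :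
    HasDerivAt (fun t => -(Real.sin (Real.pi*t)^2) / Real.sin (Real.pi*(t+y))^2)
      (-(2*Real.pi) * Real.sin (Real.pi*x) * Real.sin (Real.pi*y) /
        Real.sin (Real.pi*(x+y))^3) x := by
  have hnum : HasDerivAt (fun t => -(Real.sin (Real.pi*t)^2))
      (-(2 * Real.sin (Real.pi*x) * (Real.pi * Real.cos (Real.pi*x)))) x := by
    have := ((hasDerivAt_sin_mul x).pow 2).neg
    exact this.congr_deriv (by push_cast; ring)
  have hden : HasDerivAt (fun t => Real.sin (Real.pi*(t+y))^2)
      (2 * Real.sin (Real.pi*(x+y)) * (Real.pi * Real.cos (Real.pi*(x+y)))) x := by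
    have := (hasDerivAt_inner y x).pow 2
    exact this.congr_deriv (by push_cast; ring)
  have H := hnum.div hden (pow_ne_zero 2 h)
  refine H.congr_deriv ?_
  rw [sin_aux x y]
  field_simp
  ring

private lemma alg_key (p s c sa sb : ℝ) (hs : s ≠ 0) (hpyth : s^2 + c^2 = 1) :
    2*p*sb^2*c/s^3 * (2*p*sa^2*c/s^3) - (-(2*p)*sa*sb/s^3)^2 =
      -(4*p^2)*(sa^2*sb^2)/s^4 := by
  field_simp
  linear_combination (4*p^2*sa^2*sb^2) * hpyth

theorem hessian_determinant_negative
    (a b : ℝ) (ha : a ∈ Set.Ioo (0:ℝ) 1) (hb : b ∈ Set.Ioo (0:ℝ) 1)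
    (hab : a + b ∈ Set.Ioo (0:ℝ) 1) :
    let v : ℝ → ℝ → ℝ := fun x y =>
      -(1 / Real.pi) * (Real.sin (Real.pi * x) * Real.sin (Real.pi * y)) /
        Real.sin (Real.pi * (x + y));
    let vaa := deriv (deriv (fun x => v x b)) a;
    let vbb := deriv (deriv (fun y => v a y)) b;
    let vab := deriv (fun x => deriv (fun y => v x y) b) a;
    vaa * vbb - vab ^ 2 =
      -(4 * Real.pi ^ 2) * (Real.sin (Real.pi * a) ^ 2 * Real.sin (Real.pi * b) ^ 2) /
        Real.sin (Real.pi * (a + b)) ^ 4 ∧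
    vaa * vbb - vab ^ 2 < 0 := by
  intro v vaa vbb vab
  have hpi := Real.pi_pos
  have hsin_pos : ∀ t : ℝ, t ∈ Set.Ioo (0:ℝ) 1 → 0 < Real.sin (Real.pi * t) := by
    intro t ht
    apply Real.sin_pos_of_pos_of_lt_pi
    · exact mul_pos hpi ht.1
    · nlinarith [ht.2]
  have hsa := hsin_pos a ha
  have hsb := hsin_pos b hb
  have hs := hsin_pos (a+b) hab
  have hsne : Real.sin (Real.pi * (a+b)) ≠ 0 := ne_of_gt hs
  -- open sets
  have hcont1 : Continuous fun x : ℝ => Real.sin (Real.pi*(x+b)) := by continuity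
  have hcont2 : Continuous fun y : ℝ => Real.sin (Real.pi*(a+y)) := by continuity
  have hU1 : {x : ℝ | Real.sin (Real.pi*(x+b)) ≠ 0} ∈ nhds a := by
    refine (isOpen_ne.preimage hcont1).mem_nhds ?_
    exact hsne
  have hU2 : {y : ℝ | Real.sin (Real.pi*(a+y)) ≠ 0} ∈ nhds b := by
    refine (isOpen_ne.preimage hcont2).mem_nhds ?_
    exact hsne
  -- vaa
  have hev1 : deriv (fun x => v x b) =ᶠ[nhds a]
      fun x => -(Real.sin (Real.pi*b)^2) / Real.sin (Real.pi*(x+b))^2 := by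
    refine Filter.eventuallyEq_of_mem hU1 fun x hx => ?_
    exact (hasDerivAt_vx b x hx).deriv
  have hvaa : vaa = 2*Real.pi*(Real.sin (Real.pi*b)^2)*Real.cos (Real.pi*(a+b)) /
      Real.sin (Real.pi*(a+b))^3 := by
    show deriv (deriv (fun x => v x b)) a = _
    rw [hev1.deriv_eq]
    exact (hasDerivAt_w (Real.sin (Real.pi*b)^2) b a hsne).deriv
  -- vbb
  have hev2 : deriv (fun y => v a y) =ᶠ[nhds b]
      fun y => -(Real.sin (Real.pi*a)^2) / Real.sin (Real.pi*(a+y))^2 := by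
    refine Filter.eventuallyEq_of_mem hU2 fun y hy => ?_
    exact (hasDerivAt_vy a y hy).deriv
  have hvbb : vbb = 2*Real.pi*(Real.sin (Real.pi*a)^2)*Real.cos (Real.pi*(a+b)) /
      Real.sin (Real.pi*(a+b))^3 := by
    show deriv (deriv (fun y => v a y)) b = _
    rw [hev2.deriv_eq]
    exact (hasDerivAt_w' (Real.sin (Real.pi*a)^2) a b hsne).deriv
  -- vab
  have hev3 : (fun x => deriv (fun y => v x y) b) =ᶠ[nhds a]
      fun x => -(Real.sin (Real.pi*x)^2) / Real.sin (Real.pi*(x+b))^2 := by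
    refine Filter.eventuallyEq_of_mem hU1 fun x hx => ?_
    exact (hasDerivAt_vy x b hx).deriv
  have hvab : vab = -(2*Real.pi) * Real.sin (Real.pi*a) * Real.sin (Real.pi*b) /
      Real.sin (Real.pi*(a+b))^3 := by
    show deriv (fun x => deriv (fun y => v x y) b) a = _
    rw [hev3.deriv_eq]
    exact (hasDerivAt_m b a hsne).deriv
  have hpyth := Real.sin_sq_add_cos_sq (Real.pi*(a+b))
  have hkey := alg_key Real.pi (Real.sin (Real.pi*(a+b))) (Real.cos (Real.pi*(a+b)))
    (Real.sin (Real.pi*a)) (Real.sin (Real.pi*b)) hsne hpyth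
  have heq : vaa * vbb - vab ^ 2 =
      -(4 * Real.pi ^ 2) * (Real.sin (Real.pi * a) ^ 2 * Real.sin (Real.pi * b) ^ 2) /
        Real.sin (Real.pi * (a + b)) ^ 4 := by
    rw [hvaa, hvbb, hvab]
    exact hkey
  refine ⟨heq, ?_⟩
  rw [heq]
  apply div_neg_of_neg_of_pos
  · have h1 : 0 < 4 * Real.pi ^ 2 * (Real.sin (Real.pi * a) ^ 2 * Real.sin (Real.pi * b) ^ 2) := by
      positivity
    linarith
  · positivity
end

section
/- For all a, b in (0,1) with a + b in (0,1), the Hessian matrix of v(a,b) = -(1/π)·sin(πa)sin(πb)/sin(π(a+b)) has one strictly positive and one strictly negative eigenvalue. -/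
open Real

lemma hasDerivAt_sin_pi (x : ℝ) : HasDerivAt (fun x : ℝ => Real.sin (π * x)) (π * Real.cos (π * x)) x := by
  have h := (Real.hasDerivAt_sin (π * x)).comp x ((hasDerivAt_id x).const_mul π)
  simpa [Function.comp_def, mul_comm] using h

lemma first_deriv (t x : ℝ) (hS : Real.sin (π * (x + t)) ≠ 0) :
    HasDerivAt (fun x : ℝ => -(1 / π) * (Real.sin (π * x) * Real.sin (π * t)) /
        Real.sin (π * (x + t)))
      (-(Real.sin (π * t))^2 / (Real.sin (π * (x + t)))^2) x := by
  have hπ : (π : ℝ) ≠ 0 := Real.pi_ne_zero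
  have hSd : HasDerivAt (fun x : ℝ => Real.sin (π * (x + t))) (π * Real.cos (π * (x + t))) x := by
    have h := ((hasDerivAt_id x).add_const t).const_mul π
    have := (Real.hasDerivAt_sin (π * (x + t))).comp x h
    simpa [Function.comp_def, mul_comm] using this
  have hN : HasDerivAt (fun x : ℝ => -(1 / π) * (Real.sin (π * x) * Real.sin (π * t)))
      (-(1 / π) * (π * Real.cos (π * x) * Real.sin (π * t))) x := by
    have := ((hasDerivAt_sin_pi x).mul_const (Real.sin (π * t))).const_mul (-(1 / π))
    simpa [mul_assoc] using this
  have h := hN.fun_div hSd hS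
  refine h.congr_deriv ?_
  congr 1
  have key : Real.sin (π * (x + t)) * Real.cos (π * x)
      - Real.cos (π * (x + t)) * Real.sin (π * x) = Real.sin (π * t) := by
    rw [← Real.sin_sub]; ring_nf
  field_simp
  linear_combination (-Real.sin (π * t)) * key

lemma second_deriv_pure (t x : ℝ) (hS : Real.sin (π * (x + t)) ≠ 0) :
    HasDerivAt (fun x : ℝ => -(Real.sin (π * t))^2 / (Real.sin (π * (x + t)))^2)
      (2 * π * (Real.sin (π * t))^2 * Real.cos (π * (x + t)) / (Real.sin (π * (x + t)))^3) x := by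
  have hSd : HasDerivAt (fun x : ℝ => Real.sin (π * (x + t))) (π * Real.cos (π * (x + t))) x := by
    have h := ((hasDerivAt_id x).add_const t).const_mul π
    have := (Real.hasDerivAt_sin (π * (x + t))).comp x h
    simpa [Function.comp_def, mul_comm] using this
  have hP : HasDerivAt (fun x : ℝ => (Real.sin (π * (x + t)))^2)
      (2 * Real.sin (π * (x + t)) * (π * Real.cos (π * (x + t)))) x := by
    have := hSd.fun_pow 2
    simpa [mul_comm, mul_assoc] using this
  have h := (hasDerivAt_const x (-(Real.sin (π * t))^2)).fun_div hP (pow_ne_zero 2 hS)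
  refine h.congr_deriv ?_
  field_simp
  ring

lemma second_deriv_mixed (t x : ℝ) (hS : Real.sin (π * (x + t)) ≠ 0) :
    HasDerivAt (fun x : ℝ => -(Real.sin (π * x))^2 / (Real.sin (π * (x + t)))^2)
      (-2 * π * Real.sin (π * x) * Real.sin (π * t) / (Real.sin (π * (x + t)))^3) x := by
  have hSd : HasDerivAt (fun x : ℝ => Real.sin (π * (x + t))) (π * Real.cos (π * (x + t))) x := by
    have h := ((hasDerivAt_id x).add_const t).const_mul π
    have := (Real.hasDerivAt_sin (π * (x + t))).comp x h
    simpa [Function.comp_def, mul_comm] using this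
  have hP : HasDerivAt (fun x : ℝ => (Real.sin (π * (x + t)))^2)
      (2 * Real.sin (π * (x + t)) * (π * Real.cos (π * (x + t)))) x := by
    have := hSd.fun_pow 2
    simpa [mul_comm, mul_assoc] using this
  have hN : HasDerivAt (fun x : ℝ => -(Real.sin (π * x))^2)
      (-(2 * Real.sin (π * x) * (π * Real.cos (π * x)))) x := by
    have := ((hasDerivAt_sin_pi x).fun_pow 2).fun_neg
    simpa [mul_comm, mul_assoc] using this
  have h := hN.fun_div hP (pow_ne_zero 2 hS)
  refine h.congr_deriv ?_
  have key : Real.sin (π * (x + t)) * Real.cos (π * x)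
      - Real.cos (π * (x + t)) * Real.sin (π * x) = Real.sin (π * t) := by
    rw [← Real.sin_sub]; ring_nf
  field_simp
  linear_combination (-Real.sin (π * x)) * key

lemma ev_ne (t a : ℝ) (h : Real.sin (π * (a + t)) ≠ 0) :
    ∀ᶠ x in nhds a, Real.sin (π * (x + t)) ≠ 0 := by
  have hc : Continuous fun x : ℝ => Real.sin (π * (x + t)) := by continuity
  have := hc.continuousAt (x := a)
  exact this.eventually_ne h

lemma deriv1_ev (t a : ℝ) (h : Real.sin (π * (a + t)) ≠ 0) :
    deriv (fun x : ℝ => -(1 / π) * (Real.sin (π * x) * Real.sin (π * t)) /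
        Real.sin (π * (x + t)))
      =ᶠ[nhds a] fun x => -(Real.sin (π * t))^2 / (Real.sin (π * (x + t)))^2 := by
  filter_upwards [ev_ne t a h] with x hx
  exact (first_deriv t x hx).deriv

lemma second_deriv_eq (t a : ℝ) (h : Real.sin (π * (a + t)) ≠ 0) :
    deriv (deriv (fun x : ℝ => -(1 / π) * (Real.sin (π * x) * Real.sin (π * t)) /
        Real.sin (π * (x + t)))) a
      = 2 * π * (Real.sin (π * t))^2 * Real.cos (π * (a + t)) / (Real.sin (π * (a + t)))^3 := by
  rw [(deriv1_ev t a h).deriv_eq]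
  exact (second_deriv_pure t a h).deriv

lemma mixed_eq (a b : ℝ) (h : Real.sin (π * (a + b)) ≠ 0) :
    deriv (fun x : ℝ => deriv (fun y : ℝ =>
        -(1 / π) * (Real.sin (π * x) * Real.sin (π * y)) / Real.sin (π * (x + y))) b) a
      = -2 * π * Real.sin (π * a) * Real.sin (π * b) / (Real.sin (π * (a + b)))^3 := by
  have hev : (fun x : ℝ => deriv (fun y : ℝ =>
        -(1 / π) * (Real.sin (π * x) * Real.sin (π * y)) / Real.sin (π * (x + y))) b)
      =ᶠ[nhds a] fun x => -(Real.sin (π * x))^2 / (Real.sin (π * (x + b)))^2 := by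
    filter_upwards [ev_ne b a h] with x hx
    have hx' : Real.sin (π * (b + x)) ≠ 0 := by rwa [add_comm]
    have hfun : (fun y : ℝ => -(1 / π) * (Real.sin (π * x) * Real.sin (π * y)) /
          Real.sin (π * (x + y)))
        = fun y : ℝ => -(1 / π) * (Real.sin (π * y) * Real.sin (π * x)) /
          Real.sin (π * (y + x)) := by
      funext y; rw [mul_comm (Real.sin (π * x)), add_comm x y]
    rw [hfun, (first_deriv x b hx').deriv, add_comm b x]
  rw [hev.deriv_eq]
  exact (second_deriv_mixed b a h).deriv

lemma eig_of_char (p q r e : ℝ) (he : e^2 - (p+r)*e + (p*r - q^2) = 0) :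
    Module.End.HasEigenvalue (Matrix.toLin' !![p, q; q, r]) e := by
  by_cases hep : e = p
  · subst hep
    have hq : q = 0 := by nlinarith [sq_nonneg q]
    subst hq
    apply Module.End.hasEigenvalue_of_hasEigenvector (x := ![1, 0])
    constructor
    · rw [Module.End.mem_eigenspace_iff]
      funext i
      fin_cases i <;>
        simp [Matrix.toLin'_apply, Matrix.mulVec, dotProduct, Fin.sum_univ_two]
    · intro h
      have := congrFun h 0
      simp at this
  · apply Module.End.hasEigenvalue_of_hasEigenvector (x := ![q, e - p])
    constructor
    · rw [Module.End.mem_eigenspace_iff]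
      funext i
      fin_cases i <;>
        simp [Matrix.toLin'_apply, Matrix.mulVec, dotProduct, Fin.sum_univ_two] <;>
        nlinarith [he]
    · intro h
      have := congrFun h 1
      simp at this
      exact hep (by linarith)

lemma sym2_eigenvalues (p q r : ℝ) (hdet : p*r - q^2 < 0) :
    ∃ e₁ e₂ : ℝ, 0 < e₁ ∧ e₂ < 0 ∧
      Module.End.HasEigenvalue (Matrix.toLin' !![p, q; q, r]) e₁ ∧
      Module.End.HasEigenvalue (Matrix.toLin' !![p, q; q, r]) e₂ := by
  set D := Real.sqrt ((p+r)^2 - 4*(p*r - q^2)) with hD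
  have hnn : 0 ≤ (p+r)^2 - 4*(p*r - q^2) := by nlinarith [sq_nonneg (p+r)]
  have hD2 : D^2 = (p+r)^2 - 4*(p*r - q^2) := Real.sq_sqrt hnn
  have hDnn : 0 ≤ D := Real.sqrt_nonneg _
  refine ⟨((p+r)+D)/2, ((p+r)-D)/2, ?_, ?_, ?_, ?_⟩
  · nlinarith
  · nlinarith
  · exact eig_of_char p q r _ (by nlinarith)
  · exact eig_of_char p q r _ (by nlinarith)
theorem hessian_has_opposite_sign_eigenvalues
    (a b : ℝ) (ha : a ∈ Set.Ioo (0:ℝ) 1) (hb : b ∈ Set.Ioo (0:ℝ) 1)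
    (hab : a + b ∈ Set.Ioo (0:ℝ) 1) :
    let v : ℝ → ℝ → ℝ := fun x y =>
      -(1 / Real.pi) * (Real.sin (Real.pi * x) * Real.sin (Real.pi * y)) /
        Real.sin (Real.pi * (x + y));
    let vaa := deriv (deriv (fun x => v x b)) a;
    let vbb := deriv (deriv (fun y => v a y)) b;
    let vab := deriv (fun x => deriv (fun y => v x y) b) a;
    ∃ e₁ e₂ : ℝ, 0 < e₁ ∧ e₂ < 0 ∧
      Module.End.HasEigenvalue (Matrix.toLin' !![vaa, vab; vab, vbb]) e₁ ∧
      Module.End.HasEigenvalue (Matrix.toLin' !![vaa, vab; vab, vbb]) e₂ := by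
  intro v vaa vbb vab
  have hπ := Real.pi_pos
  have hsa : 0 < Real.sin (π * a) :=
    Real.sin_pos_of_pos_of_lt_pi (by nlinarith [ha.1]) (by nlinarith [ha.2])
  have hsb : 0 < Real.sin (π * b) :=
    Real.sin_pos_of_pos_of_lt_pi (by nlinarith [hb.1]) (by nlinarith [hb.2])
  have hsc : 0 < Real.sin (π * (a + b)) :=
    Real.sin_pos_of_pos_of_lt_pi (by nlinarith [hab.1]) (by nlinarith [hab.2])
  have hc : Real.sin (π * (a + b)) ≠ 0 := ne_of_gt hsc
  have hvaa : vaa = 2 * π * (Real.sin (π * b))^2 * Real.cos (π * (a + b)) /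
      (Real.sin (π * (a + b)))^3 := second_deriv_eq b a hc
  have hvbb : vbb = 2 * π * (Real.sin (π * a))^2 * Real.cos (π * (a + b)) /
      (Real.sin (π * (a + b)))^3 := by
    show deriv (deriv (fun y => v a y)) b = _
    have hfun : (fun y => v a y)
        = fun y : ℝ => -(1 / π) * (Real.sin (π * y) * Real.sin (π * a)) /
          Real.sin (π * (y + a)) := by
      funext y
      show -(1 / π) * (Real.sin (π * a) * Real.sin (π * y)) / Real.sin (π * (a + y)) = _
      rw [mul_comm (Real.sin (π * a)), add_comm a y]
    rw [hfun, second_deriv_eq a b (by rwa [add_comm b a]), add_comm b a]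
  have hvab : vab = -2 * π * Real.sin (π * a) * Real.sin (π * b) /
      (Real.sin (π * (a + b)))^3 := mixed_eq a b hc
  have hdet : vaa * vbb - vab^2 < 0 := by
    rw [hvaa, hvbb, hvab]
    have hcs := Real.sin_sq_add_cos_sq (π * (a + b))
    have key : 2 * π * (Real.sin (π * b))^2 * Real.cos (π * (a + b)) /
          (Real.sin (π * (a + b)))^3 *
        (2 * π * (Real.sin (π * a))^2 * Real.cos (π * (a + b)) /
          (Real.sin (π * (a + b)))^3) -
        (-2 * π * Real.sin (π * a) * Real.sin (π * b) / (Real.sin (π * (a + b)))^3)^2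
        = -((2 * π * Real.sin (π * a) * Real.sin (π * b) * Real.sin (π * (a + b)))^2) /
          (Real.sin (π * (a + b)))^6 := by
      field_simp
      linear_combination hcs
    rw [key]
    apply div_neg_of_neg_of_pos
    · have : 0 < 2 * π * Real.sin (π * a) * Real.sin (π * b) * Real.sin (π * (a + b)) := by
        positivity
      nlinarith
    · positivity
  obtain ⟨e₁, e₂, h₁, h₂, he₁, he₂⟩ := sym2_eigenvalues vaa vab vbb hdet
  exact ⟨e₁, e₂, h₁, h₂, he₁, he₂⟩
end
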